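/- arXiv:2509.06034 — 5 statements merged into one kernel-verified Lean document; each statement's English description precedes it below -/
import Mathlib

section
/- For a list of integers a = (a_1,...,a_k) and a cyclic permutation σ of {1,...,k}, the difference ε(a^σ) − ε(a), where ε(a) = 1 + Σ_{j=1}^k j·(a_j + 1) and a^σ = (a_{σ(1)},...,a_{σ(k)}), equals Σ_{j<i, σ(j)>σ(i)} (a_{σ(i)} − a_{σ(j)}). -/
open Finset

lemma card_val_lt' (k m : ℕ) (h : m ≤ k) :
    (univ.filter fun j : Fin k => (j : ℕ) < m).card = m := by
  have : (univ.filter fun j : Fin k => (j : ℕ) < m) =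
      (Finset.range m).attachFin (fun x hx => lt_of_lt_of_le (mem_range.mp hx) h) := by
    ext j
    simp [Finset.mem_attachFin]
  rw [this, Finset.card_attachFin, Finset.card_range]

lemma card_val_ge' (k m : ℕ) (h : m ≤ k) :
    (univ.filter fun j : Fin k => m ≤ (j : ℕ)).card = k - m := by
  have h2 := Finset.card_filter_add_card_filter_not
    (s := (univ : Finset (Fin k))) (p := fun j : Fin k => (j : ℕ) < m)
  simp only [not_lt, card_univ, Fintype.card_fin, card_val_lt' k m h] at h2
  omega

lemma eps_coeff_aux {k : ℕ} (t i : Fin k) :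
    (((i : ℕ) : ℤ)) - ((((i + t : Fin k) : ℕ)) : ℤ) =
      ((univ.filter fun j : Fin k => j < i ∧ i + t < j + t).card : ℤ)
    - ((univ.filter fun j : Fin k => i < j ∧ j + t < i + t).card : ℤ) := by
  have hik := i.isLt
  have htk := t.isLt
  have hm : ∀ j : Fin k, ((j : ℕ) + (t : ℕ)) % k =
      if (j : ℕ) + (t : ℕ) < k then (j : ℕ) + (t : ℕ) else (j : ℕ) + (t : ℕ) - k := by
    intro j
    split_ifs with h
    · exact Nat.mod_eq_of_lt h
    · rw [Nat.mod_eq_sub_mod (le_of_not_gt h), Nat.mod_eq_of_lt (by have := j.isLt; omega)]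
  simp only [Fin.lt_def, Fin.val_add]
  by_cases hA : (i : ℕ) + (t : ℕ) < k
  · have e1 : (univ.filter fun j : Fin k =>
        (j : ℕ) < (i : ℕ) ∧ ((i : ℕ) + (t : ℕ)) % k < ((j : ℕ) + (t : ℕ)) % k) = ∅ := by
      rw [filter_eq_empty_iff]
      intro j _
      rw [hm j, hm i]
      have := j.isLt
      split_ifs <;> omega
    have e2 : (univ.filter fun j : Fin k =>
        (i : ℕ) < (j : ℕ) ∧ ((j : ℕ) + (t : ℕ)) % k < ((i : ℕ) + (t : ℕ)) % k) =
        univ.filter (fun j : Fin k => k - (t : ℕ) ≤ (j : ℕ)) := by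
      apply filter_congr
      intro j _
      rw [hm j, hm i]
      have := j.isLt
      split_ifs <;> simp <;> omega
    rw [e1, e2, card_val_ge' k (k - (t : ℕ)) (by omega), hm i]
    simp only [card_empty]
    push_cast [hA, if_pos hA]
    omega
  · have e1 : (univ.filter fun j : Fin k =>
        (j : ℕ) < (i : ℕ) ∧ ((i : ℕ) + (t : ℕ)) % k < ((j : ℕ) + (t : ℕ)) % k) =
        univ.filter (fun j : Fin k => (j : ℕ) < k - (t : ℕ)) := by
      apply filter_congr
      intro j _
      rw [hm j, hm i]
      have := j.isLt
      split_ifs <;> simp <;> omega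
    have e2 : (univ.filter fun j : Fin k =>
        (i : ℕ) < (j : ℕ) ∧ ((j : ℕ) + (t : ℕ)) % k < ((i : ℕ) + (t : ℕ)) % k) = ∅ := by
      rw [filter_eq_empty_iff]
      intro j _
      rw [hm j, hm i]
      have := j.isLt
      split_ifs <;> omega
    rw [e1, e2, card_val_lt' k (k - (t : ℕ)) (by omega), hm i]
    simp only [card_empty]
    rw [if_neg hA]
    push_cast
    omega

/-- `ε(a) = 1 + Σ_{j=1}^k j·(a_j + 1)`, with `Fin k` 0-indexed, so position `j` contributes
weight `j+1`. -/
def epsSign {k : ℕ} (a : Fin k → ℤ) : ℤ :=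
  1 + ∑ j : Fin k, (((j : ℕ) : ℤ) + 1) * (a j + 1)

lemma eps_lhs_aux {k : ℕ} (a : Fin k → ℤ) (σ : Equiv.Perm (Fin k)) :
    epsSign (fun j => a (σ j)) - epsSign a =
      ∑ j : Fin k, (((j : ℕ) : ℤ) - (((σ j : Fin k) : ℕ) : ℤ)) * a (σ j) := by
  have h0 : epsSign a = 1 + ∑ j : Fin k, ((((σ j : Fin k) : ℕ) : ℤ) + 1) * (a (σ j) + 1) :=
    congrArg (1 + ·) (Equiv.sum_comp σ (fun j => (((j : ℕ) : ℤ) + 1) * (a j + 1))).symm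
  have h1 : (∑ j : Fin k, (((j : ℕ) : ℤ))) = ∑ j : Fin k, (((σ j : Fin k) : ℕ) : ℤ) :=
    (Equiv.sum_comp σ (fun j => ((j : ℕ) : ℤ))).symm
  rw [epsSign, h0, add_sub_add_left_eq_sub, ← Finset.sum_sub_distrib]
  have : ∀ j : Fin k,
      (((j : ℕ) : ℤ) + 1) * (a (σ j) + 1) - ((((σ j : Fin k) : ℕ) : ℤ) + 1) * (a (σ j) + 1)
      = (((j : ℕ) : ℤ) - (((σ j : Fin k) : ℕ) : ℤ)) * a (σ j)
        + ((((j : ℕ) : ℤ)) - (((σ j : Fin k) : ℕ) : ℤ)) := fun j => by ring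
  rw [Finset.sum_congr rfl (fun j _ => this j), Finset.sum_add_distrib,
    Finset.sum_sub_distrib, ← h1]
  simp

lemma eps_rhs_aux {k : ℕ} (a : Fin k → ℤ) (σ : Equiv.Perm (Fin k)) :
    (∑ p ∈ univ.filter (fun p : Fin k × Fin k => p.1 < p.2 ∧ σ p.2 < σ p.1),
        (a (σ p.2) - a (σ p.1))) =
    ∑ i : Fin k,
      (((univ.filter fun j : Fin k => j < i ∧ σ i < σ j).card : ℤ)
       - ((univ.filter fun j : Fin k => i < j ∧ σ j < σ i).card : ℤ)) * a (σ i) := by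
  rw [Finset.sum_filter]
  have expand : ∀ p : Fin k × Fin k,
      (if p.1 < p.2 ∧ σ p.2 < σ p.1 then a (σ p.2) - a (σ p.1) else 0)
      = (if p.1 < p.2 ∧ σ p.2 < σ p.1 then a (σ p.2) else 0)
        - (if p.1 < p.2 ∧ σ p.2 < σ p.1 then a (σ p.1) else 0) := fun p => by
    split_ifs <;> simp
  rw [Finset.sum_congr rfl (fun p _ => expand p), Finset.sum_sub_distrib]
  rw [Fintype.sum_prod_type, Fintype.sum_prod_type]
  dsimp only
  rw [Finset.sum_comm (f := fun x y => if x < y ∧ σ y < σ x then a (σ y) else 0)]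
  rw [← Finset.sum_sub_distrib]
  refine Finset.sum_congr rfl fun i _ => ?_
  rw [← Finset.sum_filter, ← Finset.sum_filter, Finset.sum_const, Finset.sum_const]
  simp [sub_mul, nsmul_eq_mul]

/-- For a list of integers `a = (a_1,...,a_k)` and a cyclic permutation `σ` of `{1,...,k}`,
`ε(a^σ) − ε(a) = Σ_{j<i, σ(j)>σ(i)} (a_{σ(i)} − a_{σ(j)})`. -/
theorem eps_cyclic_difference {k : ℕ} (hk : 1 ≤ k) (a : Fin k → ℤ)
    (σ : Equiv.Perm (Fin k)) (hσ : ∃ t : Fin k, ∀ j, σ j = j + t) :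
    epsSign (fun j => a (σ j)) - epsSign a =
      ∑ p ∈ univ.filter (fun p : Fin k × Fin k => p.1 < p.2 ∧ σ p.2 < σ p.1),
        (a (σ p.2) - a (σ p.1)) := by
  obtain ⟨t, ht⟩ := hσ
  rw [eps_lhs_aux a σ, eps_rhs_aux a σ]
  refine Finset.sum_congr rfl fun i _ => ?_
  congr 1
  simp only [ht]
  exact eps_coeff_aux t i
end

section
/- Let σ be the cyclic permutation of {1,...,k} given by adding t modulo k (so σ(j) = j + t for j ≤ k − t and σ(j) = j + t − k otherwise). Then for any list of integers a_1,...,a_k, Σ_{j=1}^k a_{σ(j)}·(j − σ(j)) = Σ_{j=1}^{k−t} Σ_{i=k−t+1}^{k} (a_{σ(i)} − a_{σ(j)}). -/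
open Finset

/-- The cyclic shift `σ` of `{1,...,k}` by `t`: `σ(j) = j + t` for `j ≤ k − t`,
and `σ(j) = j + t − k` otherwise. -/
def cycShift (k t : ℕ) : ℕ → ℕ := fun j => if j ≤ k - t then j + t else j + t - k

/-- For the cyclic permutation `σ` of `{1,...,k}` given by adding `t` modulo `k`,
`Σ_{j=1}^k a_{σ(j)}·(j − σ(j)) = Σ_{j=1}^{k−t} Σ_{i=k−t+1}^{k} (a_{σ(i)} − a_{σ(j)})`. -/
theorem cyclic_shift_weighted_sum (k t : ℕ) (hk : 1 ≤ k) (ht1 : 1 ≤ t) (htk : t ≤ k)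
    (a : ℕ → ℤ) :
    ∑ j ∈ Icc 1 k, a (cycShift k t j) * ((j : ℤ) - (cycShift k t j : ℤ)) =
      ∑ j ∈ Icc 1 (k - t), ∑ i ∈ Icc (k - t + 1) k,
        (a (cycShift k t i) - a (cycShift k t j)) := by
  have hdisj : Disjoint (Icc 1 (k - t)) (Icc (k - t + 1) k) := by
    rw [Finset.disjoint_left]
    intro x hx hx'
    simp only [mem_Icc] at hx hx'
    omega
  have hu : Icc 1 (k - t) ∪ Icc (k - t + 1) k = Icc 1 k := by
    ext x
    simp only [mem_union, mem_Icc]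
    omega
  rw [← hu, Finset.sum_union hdisj]
  have h1 : ∑ j ∈ Icc 1 (k - t), a (cycShift k t j) * ((j : ℤ) - (cycShift k t j : ℤ))
      = ∑ j ∈ Icc 1 (k - t), (-(t : ℤ)) * a (cycShift k t j) := by
    apply Finset.sum_congr rfl
    intro j hj
    simp only [mem_Icc] at hj
    have h : cycShift k t j = j + t := by simp [cycShift, hj.2]
    rw [h]
    push_cast
    ring
  have h2 : ∑ i ∈ Icc (k - t + 1) k, a (cycShift k t i) * ((i : ℤ) - (cycShift k t i : ℤ))
      = ∑ i ∈ Icc (k - t + 1) k, ((k : ℤ) - t) * a (cycShift k t i) := by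
    apply Finset.sum_congr rfl
    intro i hi
    simp only [mem_Icc] at hi
    have h : cycShift k t i = i + t - k := by
      simp only [cycShift]
      rw [if_neg]
      omega
    rw [h]
    have hc : ((i + t - k : ℕ) : ℤ) = (i : ℤ) + t - k := by omega
    rw [hc]
    ring
  rw [h1, h2, ← Finset.mul_sum, ← Finset.mul_sum]
  simp only [Finset.sum_sub_distrib, Finset.sum_const, Nat.card_Icc, nsmul_eq_mul]
  have e1 : (k + 1 - (k - t + 1) : ℕ) = t := by omega
  have e2 : (k - t + 1 - 1 : ℕ) = k - t := by omega
  rw [e1, e2]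
  have e3 : ((k - t : ℕ) : ℤ) = (k : ℤ) - t := by omega
  rw [e3]
  simp only [← Finset.mul_sum]
  ring
end

section
/- Let a = (a_1,...,a_k) be a list of integers, fix 1 ≤ i ≤ k+1 and 0 ≤ k_2 ≤ k+1−i, let g be an integer, and write a = a⟨1⟩ ⊗ a⟨2⟩ ⊗ a⟨3⟩ with a⟨1⟩ = (a_1,...,a_{i−1}), a⟨2⟩ = (a_i,...,a_{i+k_2−1}), a⟨3⟩ = (a_{i+k_2},...,a_k). Define ε''(a) = Σ_j j·a_j. Then ε''(a⟨1⟩, |a⟨2⟩| + g + k_2, a⟨3⟩) + ε''(a⟨2⟩) ≡ ε''(a) + i·k_2 + k_2·|a⟨3⟩| + |a| + |a⟨1⟩| + i·g (mod 2), where |·| denotes the sum of the entries of a list, and (a⟨1⟩, m, a⟨3⟩) denotes the list obtained by replacing the middle block a⟨2⟩ with a single entry m. -/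
open Finset

def epsDD (b : List ℤ) : ℤ := ∑ j ∈ range b.length, ((j : ℤ) + 1) * b.getD j 0

lemma sum_getD (l : List ℤ) : ∑ j ∈ range l.length, l.getD j 0 = l.sum := by
  induction l with
  | nil => simp
  | cons c l ih =>
    rw [List.length_cons, Finset.sum_range_succ']
    simp only [List.getD_cons_succ, List.getD_cons_zero, ih, List.sum_cons]
    ring

lemma epsDD_cons (c : ℤ) (l : List ℤ) : epsDD (c :: l) = c + l.sum + epsDD l := by
  unfold epsDD
  rw [List.length_cons, Finset.sum_range_succ']
  simp only [List.getD_cons_succ, List.getD_cons_zero]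
  push_cast
  have h : ∀ j ∈ range l.length, ((j:ℤ)+1+1) * l.getD j 0
      = ((j:ℤ)+1)*l.getD j 0 + l.getD j 0 := fun j _ => by ring
  rw [Finset.sum_congr rfl h, Finset.sum_add_distrib, sum_getD]
  ring

lemma epsDD_append (x y : List ℤ) :
    epsDD (x ++ y) = epsDD x + x.length * y.sum + epsDD y := by
  induction x with
  | nil => simp [epsDD]
  | cons c l ih =>
    rw [List.cons_append, epsDD_cons, epsDD_cons, ih, List.sum_append, List.length_cons]
    push_cast
    ring

/-- Splitting congruence for `ε''` (Lemma 2.10(2) of [ST1]): with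
`a⟨1⟩ = (a_1,...,a_{i−1})`, `a⟨2⟩ = (a_i,...,a_{i+k₂−1})`, `a⟨3⟩ = (a_{i+k₂},...,a_k)`,
`ε''(a⟨1⟩, |a⟨2⟩|+g+k₂, a⟨3⟩) + ε''(a⟨2⟩)
  ≡ ε''(a) + i·k₂ + k₂·|a⟨3⟩| + |a| + |a⟨1⟩| + i·g (mod 2)`. -/
theorem epsDD_split (a : List ℤ) (i k2 : ℕ) (g : ℤ)
    (hi1 : 1 ≤ i) (hi2 : i ≤ a.length + 1) (hk2 : k2 ≤ a.length + 1 - i) :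
    Int.ModEq 2
      (epsDD (a.take (i - 1) ++
          (((a.drop (i - 1)).take k2).sum + g + (k2 : ℤ)) :: a.drop (i - 1 + k2))
        + epsDD ((a.drop (i - 1)).take k2))
      (epsDD a + (i : ℤ) * (k2 : ℤ) + (k2 : ℤ) * (a.drop (i - 1 + k2)).sum
        + a.sum + (a.take (i - 1)).sum + (i : ℤ) * g) := by
  obtain ⟨p, rfl⟩ : ∃ p, i = p + 1 := ⟨i - 1, by omega⟩
  simp only [Nat.add_sub_cancel] at *
  set A := a.take p with hAdef
  set B := (a.drop p).take k2 with hBdef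
  set C := a.drop (p + k2) with hCdef
  have hp : p ≤ a.length := by omega
  have hA : A.length = p := by rw [hAdef, List.length_take]; omega
  have hB : B.length = k2 := by
    rw [hBdef, List.length_take, List.length_drop]; omega
  have hC : C = (a.drop p).drop k2 := by
    rw [hCdef, List.drop_drop, Nat.add_comm]
  have hsplit : a = A ++ (B ++ C) := by
    rw [hC, hBdef, List.take_append_drop, hAdef, List.take_append_drop]
  nth_rewrite 2 [hsplit]
  nth_rewrite 1 [hsplit]
  rw [epsDD_append, epsDD_append, epsDD_append, epsDD_cons]
  simp only [List.sum_append, List.sum_cons, hA, hB]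
  apply Int.modEq_iff_dvd.mpr
  exact ⟨(k2:ℤ) * C.sum + A.sum, by push_cast; ring⟩
end

section
/- With notation as in the splitting lemma: a = (a_1,...,a_k) integers, 1 ≤ i ≤ k+1, 0 ≤ k_2 ≤ k+1−i, k_1 = k+1−k_2, g an integer, a⟨1⟩,a⟨2⟩,a⟨3⟩ the three consecutive blocks, ε(b) := 1 + Σ_j j(b_j+1) for a list b. Then ε(a⟨1⟩, |a⟨2⟩|+g+k_2, a⟨3⟩) + ε(a⟨2⟩) ≡ ε(a) + |a| + k + |a⟨1⟩| + i·g + k_2·|a⟨3⟩| + k_1·k_2 + i·k_2 (mod 2). -/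
open Finset

/-- `ε(b) = 1 + Σ_{j=1}^m j·(b_j + 1)` for a list of integers `b` (0-indexed: position `j`
has weight `j+1`). -/
def epsL (b : List ℤ) : ℤ := 1 + ∑ j ∈ range b.length, ((j : ℤ) + 1) * (b.getD j 0 + 1)

lemma epsL_cons (c : ℤ) (y : List ℤ) :
    epsL (c :: y) = epsL y + c + 1 + (y.sum + y.length) := by
  unfold epsL
  rw [List.length_cons, Finset.sum_range_succ']
  simp only [List.getD_cons_succ, List.getD_cons_zero]
  have h : ∑ j ∈ range y.length, ((j : ℤ) + 1 + 1) * (y.getD j 0 + 1)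
      = ∑ j ∈ range y.length, (((j : ℤ) + 1) * (y.getD j 0 + 1) + (y.getD j 0 + 1)) := by
    apply Finset.sum_congr rfl; intro j _; ring
  push_cast
  rw [h, Finset.sum_add_distrib, Finset.sum_add_distrib, sum_getD]
  simp
  ring

lemma epsL_append (x y : List ℤ) :
    epsL (x ++ y) = epsL x + epsL y - 1 + x.length * (y.sum + y.length) := by
  induction x with
  | nil => simp [epsL]
  | cons c t ih =>
    rw [List.cons_append, epsL_cons, epsL_cons, ih]
    simp only [List.sum_append, List.length_append, List.length_cons]
    push_cast
    ring

/-- Splitting congruence for `ε` (Lemma 2.10(3) of [ST1]): with `k₁ = k + 1 − k₂` and the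
three consecutive blocks `a⟨1⟩ = (a_1,...,a_{i−1})`, `a⟨2⟩ = (a_i,...,a_{i+k₂−1})`,
`a⟨3⟩ = (a_{i+k₂},...,a_k)`,
`ε(a⟨1⟩, |a⟨2⟩|+g+k₂, a⟨3⟩) + ε(a⟨2⟩)
  ≡ ε(a) + |a| + k + |a⟨1⟩| + i·g + k₂·|a⟨3⟩| + k₁·k₂ + i·k₂ (mod 2)`. -/
theorem epsL_split (a : List ℤ) (i k2 : ℕ) (g : ℤ)
    (hi1 : 1 ≤ i) (hi2 : i ≤ a.length + 1) (hk2 : k2 ≤ a.length + 1 - i) :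
    Int.ModEq 2
      (epsL (a.take (i - 1) ++
          (((a.drop (i - 1)).take k2).sum + g + (k2 : ℤ)) :: a.drop (i - 1 + k2))
        + epsL ((a.drop (i - 1)).take k2))
      (epsL a + a.sum + (a.length : ℤ) + (a.take (i - 1)).sum + (i : ℤ) * g
        + (k2 : ℤ) * (a.drop (i - 1 + k2)).sum
        + ((a.length + 1 - k2 : ℕ) : ℤ) * (k2 : ℤ) + (i : ℤ) * (k2 : ℤ)) := by
  set p := a.take (i - 1) with hp
  set q := (a.drop (i - 1)).take k2 with hq
  set r := a.drop (i - 1 + k2) with hr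
  have hd : r = (a.drop (i - 1)).drop k2 := by
    rw [hr, List.drop_drop, Nat.add_comm]
  have ha : a = p ++ (q ++ r) := by
    rw [hp, hq, hd, List.take_append_drop, List.take_append_drop]
  have hP : p.length = i - 1 := by
    rw [hp, List.length_take]; omega
  have hQ : q.length = k2 := by
    rw [hq, List.length_take, List.length_drop]; omega
  have hlen : a.length = p.length + q.length + r.length := by
    conv_lhs => rw [ha]
    simp only [List.length_append]; omega
  have hsum : a.sum = p.sum + q.sum + r.sum := by
    conv_lhs => rw [ha]
    simp only [List.sum_append]; ring
  have hEa : epsL a = epsL p + epsL q + epsL r - 2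
      + (q.length : ℤ) * (r.sum + r.length)
      + (p.length : ℤ) * (q.sum + r.sum + q.length + r.length) := by
    conv_lhs => rw [ha]
    rw [epsL_append, epsL_append]
    push_cast [List.sum_append, List.length_append]
    ring
  set m := q.sum + g + (k2 : ℤ) with hm
  have hE1 : epsL (p ++ m :: r) = epsL p + (epsL r + m + 1 + (r.sum + r.length)) - 1
      + (p.length : ℤ) * ((m + r.sum) + (r.length + 1)) := by
    rw [epsL_append, epsL_cons]
    simp only [List.sum_cons, List.length_cons]
    push_cast
    ring
  have hi' : (i : ℤ) = (p.length : ℤ) + 1 := by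
    rw [hP]; omega
  have hk2' : (k2 : ℤ) = (q.length : ℤ) := by rw [hQ]
  have hcast : ((a.length + 1 - k2 : ℕ) : ℤ) = (p.length : ℤ) + r.length + 1 := by
    have : a.length + 1 - k2 = p.length + r.length + 1 := by omega
    rw [this]; push_cast; ring
  rw [hE1, hEa, hsum, hi', hk2', hcast, hm, hk2']
  have hlenZ : (a.length : ℤ) = (p.length : ℤ) + q.length + r.length := by
    rw [hlen]; push_cast; ring
  rw [hlenZ]
  apply Int.modEq_iff_dvd.mpr
  exact ⟨(q.length : ℤ) * r.sum + q.length * r.length + p.sum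
    + (p.length : ℤ) * q.length + q.length - 1, by ring⟩
end

section
/- With the same splitting notation and additionally a fixed integer n, defining ε_p(b) := n·|b| + Σ_j j·b_j for a list b of integers: ε_p(a⟨1⟩, |a⟨2⟩|+g+k_2, a⟨3⟩) + ε(a⟨2⟩) ≡ ε_p(a) + |a| + k + |a⟨1⟩| + (i+n)·g + k_2·|a⟨3⟩| + k_1·k_2 + i·k_2 + n (mod 2). -/
open Finset

/-- `ε_p(b) = Σ_{j=1}^m (n+j)·(b_j + 1)` for a fixed integer `n`. -/
def epsP (n : ℕ) (b : List ℤ) : ℤ :=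
  ∑ j ∈ range b.length, ((n : ℤ) + (j : ℤ) + 1) * (b.getD j 0 + 1)


lemma sum_getD_s7 (b : List ℤ) : ∑ j ∈ range b.length, b.getD j 0 = b.sum := by
  induction b with
  | nil => simp
  | cons y t ih =>
    rw [List.length_cons, Finset.sum_range_succ']
    simp only [List.getD_cons_succ, List.getD_cons_zero, ih, List.sum_cons]
    ring

lemma epsP_cons (n : ℕ) (x : ℤ) (t : List ℤ) :
    epsP n (x :: t) = ((n : ℤ) + 1) * (x + 1) + epsP (n + 1) t := by
  simp only [epsP, List.length_cons, Finset.sum_range_succ', List.getD_cons_succ,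
    List.getD_cons_zero]
  rw [add_comm]
  congr 1
  all_goals first
    | exact Finset.sum_congr rfl fun j _ => by push_cast; ring
    | (push_cast; ring)

lemma epsP_append (n : ℕ) (b c : List ℤ) :
    epsP n (b ++ c) = epsP n b + epsP (n + b.length) c := by
  induction b generalizing n with
  | nil => simp [epsP]
  | cons x t ih =>
    rw [List.cons_append, epsP_cons, ih, epsP_cons]
    simp only [List.length_cons]
    have : n + 1 + t.length = n + (t.length + 1) := by omega
    rw [this]
    ring

lemma epsP_shift (n m : ℕ) (b : List ℤ) :
    epsP (n + m) b = epsP n b + (m : ℤ) * (b.sum + b.length) := by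
  simp only [epsP]
  have h1 : ∑ j ∈ range b.length, ((↑(n + m) : ℤ) + j + 1) * (b.getD j 0 + 1)
      = ∑ j ∈ range b.length,
          (((n : ℤ) + j + 1) * (b.getD j 0 + 1) + ((m : ℤ) * b.getD j 0 + m)) :=
    Finset.sum_congr rfl fun j _ => by push_cast; ring
  rw [h1, Finset.sum_add_distrib, Finset.sum_add_distrib, ← Finset.mul_sum, Finset.sum_const,
    card_range, nsmul_eq_mul, sum_getD_s7]
  ring

lemma epsL_eq (b : List ℤ) : epsL b = 1 + epsP 0 b := by
  simp [epsL, epsP]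

/-- Splitting congruence for `ε_p` (Lemma 3.4(3) of the paper): with `k₁ = k + 1 − k₂` and
blocks `a⟨1⟩, a⟨2⟩, a⟨3⟩` of `a` as before,
`ε_p(a⟨1⟩, |a⟨2⟩|+g+k₂, a⟨3⟩) + ε(a⟨2⟩)
  ≡ ε_p(a) + |a| + k + |a⟨1⟩| + (i+n)·g + k₂·|a⟨3⟩| + k₁·k₂ + i·k₂ + n (mod 2)`. -/
theorem epsP_split (n : ℕ) (a : List ℤ) (i k2 : ℕ) (g : ℤ)
    (hi1 : 1 ≤ i) (hi2 : i ≤ a.length + 1) (hk2 : k2 ≤ a.length + 1 - i) :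
    Int.ModEq 2
      (epsP n (a.take (i - 1) ++
          (((a.drop (i - 1)).take k2).sum + g + (k2 : ℤ)) :: a.drop (i - 1 + k2))
        + epsL ((a.drop (i - 1)).take k2))
      (epsP n a + a.sum + (a.length : ℤ) + (a.take (i - 1)).sum
        + ((i : ℤ) + (n : ℤ)) * g + (k2 : ℤ) * (a.drop (i - 1 + k2)).sum
        + ((a.length + 1 - k2 : ℕ) : ℤ) * (k2 : ℤ) + (i : ℤ) * (k2 : ℤ) + (n : ℤ)) := by
  obtain ⟨m, rfl⟩ : ∃ m, i = m + 1 := ⟨i - 1, (Nat.succ_pred_eq_of_pos hi1).symm⟩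
  simp only [Nat.add_sub_cancel]
  have hm : m ≤ a.length := by omega
  have hk2' : k2 ≤ (a.drop m).length := by rw [List.length_drop]; omega
  set a1 := a.take m with ha1
  set a2 := (a.drop m).take k2 with ha2
  set a3 := (a.drop m).drop k2 with ha3
  have hl1 : a1.length = m := List.length_take_of_le hm
  have hl2 : a2.length = k2 := List.length_take_of_le hk2'
  have hl3 : a3.length = a.length - m - k2 := by
    rw [ha3, List.length_drop, List.length_drop]
  have hdrop : a.drop (m + k2) = a3 := by rw [ha3, List.drop_drop, Nat.add_comm]
  have hsplit : a = a1 ++ (a2 ++ a3) := by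
    rw [ha1, ha2, ha3, List.take_append_drop, List.take_append_drop]
  have hlenN : a.length = m + k2 + a3.length := by omega
  have hsum : a.sum = a1.sum + a2.sum + a3.sum := by
    conv_lhs => rw [hsplit]
    simp [add_assoc]
  have hcast : ((a.length + 1 - k2 : ℕ) : ℤ) = (m : ℤ) + (a3.length : ℤ) + 1 := by
    have : a.length + 1 - k2 = m + a3.length + 1 := by omega
    rw [this]; push_cast; ring
  have hepsa : epsP n a = epsP n a1 + (epsP 0 a2 + ((n : ℤ) + m) * (a2.sum + k2))
      + (epsP n a3 + ((m : ℤ) + k2) * (a3.sum + a3.length)) := by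
    conv_lhs => rw [hsplit]
    rw [epsP_append, hl1, epsP_append, hl2]
    have e1 : epsP (n + m) a2 = epsP 0 a2 + ((n + m : ℕ) : ℤ) * (a2.sum + a2.length) := by
      have := epsP_shift 0 (n + m) a2; simpa using this
    have e2 : epsP (n + m + k2) a3 = epsP n a3 + ((m + k2 : ℕ) : ℤ) * (a3.sum + a3.length) := by
      rw [show n + m + k2 = n + (m + k2) by omega, epsP_shift]
    rw [e1, e2, hl2]; push_cast; ring
  have hepsL : epsP n (a1 ++ (a2.sum + g + (k2 : ℤ)) :: a3)
      = epsP n a1 + ((n : ℤ) + m + 1) * (a2.sum + g + k2 + 1)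
        + (epsP n a3 + ((m : ℤ) + 1) * (a3.sum + a3.length)) := by
    rw [epsP_append, hl1, epsP_cons]
    have e3 : epsP (n + m + 1) a3 = epsP n a3 + ((m + 1 : ℕ) : ℤ) * (a3.sum + a3.length) := by
      rw [show n + m + 1 = n + (m + 1) by omega, epsP_shift]
    rw [e3]; push_cast; ring
  rw [hdrop, hepsL, hepsa, epsL_eq, hsum, hcast]
  have hlenZ : (a.length : ℤ) = (m : ℤ) + k2 + a3.length := by exact_mod_cast hlenN
  rw [hlenZ]
  exact Int.modEq_iff_dvd.mpr
    ⟨a1.sum + (k2 : ℤ) * a3.sum + (k2 : ℤ) * a3.length + ((m : ℤ) + 1) * k2 - 1, by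
      push_cast; ring⟩
end
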